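/- arXiv:2106.01242 — 3 statements merged into one kernel-verified Lean document; each statement's English description precedes it below -/
import Mathlib

section
/- Let m ≥ 1, 0 < β < 1/2, and let A be a multiset of m real numbers partitioned into a 'benign' set A⁺ of size > (1-β)m whose elements are i.i.d. samples from N(μ, 1), and an adversarial set A⁻ of size < βm with arbitrary values. Let Φ be the standard normal CDF and let t satisfy Φ(t) ≥ 1/2 + β. Then the probability that the median of A exceeds μ + t is at most exp(-2m(Φ(t) - 1/2 - β)²). -/
open MeasureTheory ProbabilityTheory Real

/-- Median of a multiset of reals: its `⌈card/2⌉`-th smallest element. -/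
noncomputable def multisetMedian (s : Multiset ℝ) : ℝ :=
  (s.sort (· ≤ ·)).getD ((s.card + 1) / 2 - 1) 0

/-- Standard normal CDF. -/
noncomputable def stdGaussCDF (t : ℝ) : ℝ :=
  ((gaussianReal 0 1) (Set.Iic t)).toReal

lemma hoeff_bernoulli {p : ℝ} (hp0 : 0 ≤ p) (hp1 : p ≤ 1) {r : ℝ} (hr : 0 ≤ r) :
    1 - p + p * Real.exp r ≤ Real.exp (p * r + r ^ 2 / 8) := by
  set q : ℝ := 1 - p with hq
  have hq0 : 0 ≤ q := by linarith
  have hφ1 : ∀ x : ℝ, 0 ≤ x → 1 ≤ q + p * Real.exp x := by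
    intro x hx
    nlinarith [Real.one_le_exp hx, Real.exp_pos x]
  have hφpos : ∀ x : ℝ, 0 ≤ x → 0 < q + p * Real.exp x := fun x hx =>
    lt_of_lt_of_le one_pos (hφ1 x hx)
  -- g1 is the derivative of g
  set g1 : ℝ → ℝ := fun x => p + x / 4 - p * Real.exp x / (q + p * Real.exp x) with hg1def
  set g : ℝ → ℝ := fun x => p * x + x ^ 2 / 8 - Real.log (q + p * Real.exp x) with hgdef
  have hφd : ∀ x : ℝ, HasDerivAt (fun y => q + p * Real.exp y) (p * Real.exp x) x := by
    intro x
    exact ((Real.hasDerivAt_exp x).const_mul p).const_add q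
  have hg1d : ∀ x : ℝ, 0 ≤ x →
      HasDerivAt g1 (1 / 4 - (p * Real.exp x * (q + p * Real.exp x)
        - p * Real.exp x * (p * Real.exp x)) / (q + p * Real.exp x) ^ 2) x := by
    intro x hx
    have h1 : HasDerivAt (fun y : ℝ => p + y / 4) (1 / 4) x := by
      simpa using ((hasDerivAt_id x).div_const 4).const_add p
    have h2 : HasDerivAt (fun y => p * Real.exp y / (q + p * Real.exp y))
        ((p * Real.exp x * (q + p * Real.exp x) - p * Real.exp x * (p * Real.exp x))
          / (q + p * Real.exp x) ^ 2) x :=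
      ((Real.hasDerivAt_exp x).const_mul p).div (hφd x) (hφpos x hx).ne'
    exact h1.sub h2
  have hgd : ∀ x : ℝ, 0 ≤ x → HasDerivAt g (g1 x) x := by
    intro x hx
    have h1 : HasDerivAt (fun y : ℝ => p * y + y ^ 2 / 8) (p + x / 4) x := by
      have := ((hasDerivAt_pow 2 x).div_const 8).const_add 0
      have h2 : HasDerivAt (fun y : ℝ => p * y) p x := by
        simpa using (hasDerivAt_id x).const_mul p
      have h3 : HasDerivAt (fun y : ℝ => y ^ 2 / 8) (x / 4) x := by
        have := (hasDerivAt_pow 2 x).div_const 8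
        exact this.congr_deriv (by norm_num; ring)
      exact h2.add h3
    have h2 : HasDerivAt (fun y => Real.log (q + p * Real.exp y))
        (p * Real.exp x / (q + p * Real.exp x)) x := (hφd x).log (hφpos x hx).ne'
    exact h1.sub h2
  -- g1 is monotone on Ici 0
  have hg1mono : MonotoneOn g1 (Set.Ici (0:ℝ)) := by
    apply monotoneOn_of_deriv_nonneg (convex_Ici 0)
    · exact fun x hx => ((hg1d x hx).continuousAt).continuousWithinAt
    · intro x hx
      rw [interior_Ici] at hx
      exact ((hg1d x (le_of_lt hx)).differentiableAt).differentiableWithinAt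
    · intro x hx
      rw [interior_Ici] at hx
      rw [(hg1d x hx.le).deriv]
      have hφ := hφ1 x hx.le
      have he := Real.exp_pos x
      have hφ2 : (0:ℝ) < (q + p * Real.exp x)^2 := by positivity
      rw [sub_nonneg, div_le_iff₀ hφ2]
      nlinarith [sq_nonneg (q - p * Real.exp x)]
  -- hence g1 ≥ 0 on Ici 0
  have hqp : q + p = 1 := by rw [hq]; ring
  have hg10 : g1 0 = 0 := by
    simp only [hg1def]
    rw [Real.exp_zero, mul_one, hqp]
    simp
  have hg1nn : ∀ x : ℝ, 0 ≤ x → 0 ≤ g1 x := by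
    intro x hx
    have := hg1mono (Set.self_mem_Ici) (Set.mem_Ici.mpr hx) hx
    rw [hg10] at this; exact this
  -- g monotone on Ici 0
  have hgmono : MonotoneOn g (Set.Ici (0:ℝ)) := by
    apply monotoneOn_of_deriv_nonneg (convex_Ici 0)
    · exact fun x hx => ((hgd x hx).continuousAt).continuousWithinAt
    · intro x hx
      rw [interior_Ici] at hx
      exact ((hgd x (le_of_lt hx)).differentiableAt).differentiableWithinAt
    · intro x hx
      rw [interior_Ici] at hx
      rw [(hgd x hx.le).deriv]
      exact hg1nn x hx.le
  have hg0 : g 0 = 0 := by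
    simp only [hgdef]
    rw [Real.exp_zero, mul_one, hqp]
    simp
  have hgr : 0 ≤ g r := by
    have := hgmono (Set.self_mem_Ici) (Set.mem_Ici.mpr hr) hr
    rw [hg0] at this; exact this
  -- conclude
  have hlog : Real.log (q + p * Real.exp r) ≤ p * r + r ^ 2 / 8 := by
    simp only [hgdef] at hgr; linarith
  have := (Real.log_le_iff_le_exp (hφpos r hr)).mp hlog
  linarith [this]

lemma median_count {s : Multiset ℝ} {c : ℝ} (hs : s.card ≠ 0) (h : c < multisetMedian s) :
    s.card + 1 - (s.card + 1) / 2 ≤ Multiset.countP (fun x => c < x) s := by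
  set l := s.sort (· ≤ ·) with hl
  have hlen : l.length = s.card := Multiset.length_sort _
  have hsort : l.Pairwise (· ≤ ·) := s.pairwise_sort _
  set m := s.card with hm
  set k := (m + 1) / 2 with hk
  have hk1 : 1 ≤ k := by omega
  have hkm : k ≤ m := by omega
  have hlt : k - 1 < l.length := by omega
  have hmed : multisetMedian s = l[k-1] := by
    rw [multisetMedian, ← hl, List.getD_eq_getElem l 0 hlt]
  rw [hmed] at h
  -- all elements of l.drop (k-1) exceed c
  have hdropall : ∀ a ∈ l.drop (k-1), c < a := by
    intro a ha
    obtain ⟨j, hj, rfl⟩ := List.mem_iff_getElem.1 ha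
    rw [List.getElem_drop]
    refine lt_of_lt_of_le h ?_
    have : (⟨k-1, hlt⟩ : Fin l.length) ≤ ⟨k-1+j, by
      have := hj; rw [List.length_drop] at this; omega⟩ := by
      simp [Fin.le_def]
    simpa using hsort.rel_get_of_le this
  -- countP bound
  have hsub : (l.drop (k-1)).length ≤ l.countP (fun x => decide (c < x)) := by
    have h1 : (l.drop (k-1)).countP (fun x => decide (c < x)) = (l.drop (k-1)).length := by
      rw [List.countP_eq_length]
      intro a ha
      simpa using hdropall a ha
    rw [← h1]
    exact (List.drop_sublist _ _).countP_le
  have hcount : Multiset.countP (fun x => c < x) s = l.countP (fun x => decide (c < x)) := by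
    conv_lhs => rw [← Multiset.sort_eq s (· ≤ ·)]
    rw [Multiset.coe_countP]
  rw [hcount]
  have : (l.drop (k-1)).length = m + 1 - k := by
    rw [List.length_drop, hlen]; omega
  omega

private lemma chern_exponent {mR bR p s0 δ r : ℝ} (hb : 0 < bR) (hbm : bR ≤ mR)
    (ha : δ * mR ≤ s0 - p * bR) (hδm : 0 ≤ δ * mR)
    (hr : r = 4 * (s0 - p * bR) / bR) :
    -r * s0 + bR * (p * r + r ^ 2 / 8) ≤ -2 * mR * δ ^ 2 := by
  have hbne : bR ≠ 0 := ne_of_gt hb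
  have hrb : r * bR = 4 * (s0 - p * bR) := by
    rw [hr]; exact div_mul_cancel₀ _ hbne
  have hid : (-r * s0 + bR * (p * r + r ^ 2 / 8)) * bR = -2 * (s0 - p * bR) ^ 2 := by
    linear_combination (r * bR / 8 - (s0 - p * bR) / 2) * hrb
  have key : -r * s0 + bR * (p * r + r ^ 2 / 8) = -2 * (s0 - p * bR) ^ 2 / bR :=
    eq_div_of_mul_eq hbne hid
  rw [key, div_le_iff₀ hb]
  have h5 : (δ * mR) ^ 2 ≤ (s0 - p * bR) ^ 2 := by nlinarith
  have hδ2m : 0 ≤ δ ^ 2 * mR := by nlinarith [sq_nonneg δ, sq_nonneg (δ * mR)]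
  nlinarith [mul_le_mul_of_nonneg_left hbm hδ2m]

/-- Robust one-sided median concentration: with `m` scores, more than `(1-β)m` of which are
i.i.d. `N(μ,1)` samples and fewer than `βm` adversarial (`β < 1/2`), for `t` with
`Φ(t) ≥ 1/2 + β`, the probability that the median exceeds `μ + t` is at most
`exp(-2m(Φ(t) - 1/2 - β)²)`. -/
theorem stmt0 {Ω : Type*} [MeasureSpace Ω] [IsProbabilityMeasure (ℙ : Measure Ω)]
    (m b : ℕ) (hm : 1 ≤ m) (β μ t : ℝ) (hβ0 : 0 < β) (hβ : β < 1/2)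
    (X : Fin b → Ω → ℝ) (hXmeas : ∀ i, Measurable (X i))
    (hXindep : iIndepFun X ℙ)
    (hXlaw : ∀ i, Measure.map (X i) ℙ = gaussianReal μ 1)
    (adv : Multiset ℝ)
    (hcard : b + adv.card = m)
    (hbenign : (1 - β) * m < (b : ℝ))
    (hadv : (adv.card : ℝ) < β * m)
    (ht : 1/2 + β ≤ stdGaussCDF t) :
    ℙ {ω | μ + t < multisetMedian ((Finset.univ.val.map fun i => X i ω) + adv)}
      ≤ ENNReal.ofReal (Real.exp (-2 * m * (stdGaussCDF t - 1/2 - β)^2)) := by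
  classical
  set Φ := stdGaussCDF t with hΦ
  set p : ℝ := 1 - Φ with hpdef
  set δ : ℝ := Φ - 1/2 - β with hδdef
  set s0 : ℝ := (1/2 - β) * m with hs0def
  clear_value Φ p δ s0
  -- basic bounds
  have hΦ0 : 0 ≤ Φ := by rw [hΦ]; exact ENNReal.toReal_nonneg
  have hΦ1 : Φ ≤ 1 := by
    have h1 : (gaussianReal 0 1) (Set.Iic t) ≤ 1 := prob_le_one
    calc Φ = ((gaussianReal 0 1) (Set.Iic t)).toReal := hΦ
    _ ≤ (1 : ENNReal).toReal := ENNReal.toReal_mono (by norm_num) h1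
    _ = 1 := ENNReal.toReal_one
  have hp0 : 0 ≤ p := by simp [hpdef]; linarith
  have hp1 : p ≤ 1 := by simp [hpdef]; linarith
  have hδ0 : 0 ≤ δ := by simp [hδdef]; linarith
  have hmR : (1:ℝ) ≤ m := by exact_mod_cast hm
  have hb1 : 1 ≤ b := by
    have h0 : (0:ℝ) < (1 - β) * m := mul_pos (by linarith) (by linarith)
    have : (0:ℝ) < b := by linarith
    exact_mod_cast Nat.cast_pos.mp this
  have hbm : b ≤ m := by omega
  have hbR : (0:ℝ) < b := by exact_mod_cast hb1
  have hbmR : (b:ℝ) ≤ m := by exact_mod_cast hbm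
  -- the Bernoulli indicators
  set Z : Fin b → Ω → ℝ := fun i ω => if μ + t < X i ω then 1 else 0 with hZdef
  have hZmeas : ∀ i, Measurable (Z i) := by
    intro i
    exact Measurable.ite (measurableSet_lt measurable_const (hXmeas i))
      measurable_const measurable_const
  have hZindep : iIndepFun Z ℙ := by
    have hg : ∀ _i : Fin b, Measurable (fun x : ℝ => if μ + t < x then (1:ℝ) else 0) :=
      fun _ => Measurable.ite measurableSet_Ioi measurable_const measurable_const
    exact hXindep.comp _ hg
  set Sf : Ω → ℝ := ∑ i, Z i with hSf
  -- tail probability of each X i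
  have hPA : ∀ i, (ℙ {ω | μ + t < X i ω}) = ENNReal.ofReal p := by
    intro i
    have h1 : {ω | μ + t < X i ω} = X i ⁻¹' (Set.Ioi (μ + t)) := rfl
    rw [h1, ← Measure.map_apply (hXmeas i) measurableSet_Ioi, hXlaw i]
    have hmap : gaussianReal μ 1 = Measure.map (· + μ) (gaussianReal 0 1) := by
      rw [gaussianReal_map_add_const (μ := 0) (v := 1) μ, zero_add]
    rw [hmap, Measure.map_apply (measurable_add_const μ) measurableSet_Ioi]
    have hpre : (· + μ) ⁻¹' (Set.Ioi (μ + t)) = Set.Ioi t := by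
      ext x
      simp only [Set.mem_preimage, Set.mem_Ioi]
      constructor <;> intro h <;> linarith
    rw [hpre]
    have hIoi : Set.Ioi t = (Set.Iic t)ᶜ := by simp
    rw [hIoi, prob_compl_eq_one_sub measurableSet_Iic]
    have hfin : (gaussianReal 0 1) (Set.Iic t) ≠ ⊤ := measure_ne_top _ _
    rw [hpdef, hΦ, stdGaussCDF, ENNReal.ofReal_sub _ ENNReal.toReal_nonneg,
      ENNReal.ofReal_one, ENNReal.ofReal_toReal hfin]
  -- mgf of each Z i
  have hAmeas : ∀ i, MeasurableSet {ω | μ + t < X i ω} :=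
    fun i => measurableSet_lt measurable_const (hXmeas i)
  have heq : ∀ (r : ℝ) (i : Fin b), (fun ω => Real.exp (r * Z i ω))
      = fun ω => Set.indicator {ω | μ + t < X i ω} (fun _ => Real.exp r - 1) ω + 1 := by
    intro r i
    funext ω
    by_cases h : μ + t < X i ω <;>
      simp [hZdef, h, Set.indicator, Set.mem_setOf_eq]
  have hmgf : ∀ (r : ℝ) (i : Fin b), mgf (Z i) ℙ r = (1 - p) + p * Real.exp r := by
    intro r i
    rw [mgf, heq r i, integral_add ((integrable_const _).indicator (hAmeas i))
      (integrable_const 1), integral_indicator_const _ (hAmeas i), integral_const,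
      measureReal_def, measureReal_def, measure_univ, hPA i]
    rw [ENNReal.toReal_ofReal hp0]
    simp only [smul_eq_mul, ENNReal.toReal_one, one_smul]
    ring
  have hint : ∀ (r : ℝ) (i : Fin b), Integrable (fun ω => Real.exp (r * Z i ω)) ℙ := by
    intro r i
    rw [heq r i]
    exact ((integrable_const _).indicator (hAmeas i)).add (integrable_const 1)
  -- event inclusion
  have hsub : {ω | μ + t < multisetMedian ((Finset.univ.val.map fun i => X i ω) + adv)}
      ⊆ {ω | s0 ≤ Sf ω} := by
    intro ω hω
    simp only [Set.mem_setOf_eq] at hω ⊢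
    set full := (Finset.univ.val.map fun i => X i ω) + adv with hfull
    have hcardfull : full.card = m := by
      rw [hfull, Multiset.card_add, Multiset.card_map]
      simpa using hcard
    have hN := median_count (s := full) (c := μ + t) (by omega) hω
    rw [hcardfull] at hN
    rw [hfull, Multiset.countP_add, Multiset.countP_map] at hN
    have h1 : Multiset.countP (fun x => μ + t < x) adv ≤ adv.card :=
      Multiset.countP_le_card _ _
    set cf : ℕ := Multiset.card (Multiset.filter (fun a => μ + t < X a ω) Finset.univ.val)
      with hcf
    have h2 : Sf ω = (cf : ℝ) := by
      have : Sf ω = ∑ i, Z i ω := by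
        rw [hSf]; simp [Finset.sum_apply]
      rw [this]
      have h3 : (∑ i, Z i ω) = ((Finset.univ.filter fun i => μ + t < X i ω).card : ℝ) := by
        simp only [hZdef]
        rw [Finset.sum_boole]
      rw [h3, hcf]
      congr 1
    have hNnat : m + 1 - (m + 1) / 2 ≤ cf + adv.card := by omega
    have hNR : ((m:ℝ)/2 + 1/2) ≤ ((m + 1 - (m + 1) / 2 : ℕ) : ℝ) := by
      have hle : (m + 1) / 2 ≤ m + 1 := Nat.div_le_self _ _
      have hcast := Nat.cast_div_le (α := ℝ) (m := m + 1) (n := 2)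
      push_cast [Nat.cast_sub hle]
      push_cast at hcast
      linarith
    have hcast2 : ((m + 1 - (m + 1) / 2 : ℕ) : ℝ) ≤ (cf : ℝ) + adv.card := by
      exact_mod_cast hNnat
    rw [h2, hs0def]
    linarith
  -- Chernoff
  set r : ℝ := 4 * (s0 - p * b) / b with hrdef
  clear_value r
  have ha0 : δ * m ≤ s0 - p * b := by
    have : p * (b:ℝ) ≤ p * m := by nlinarith
    simp only [hs0def, hδdef, hpdef] at *
    nlinarith
  have hδm0 : 0 ≤ δ * m := by positivity
  have hr0 : 0 ≤ r := by
    rw [hrdef]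
    apply div_nonneg _ hbR.le
    nlinarith
  have hchern : (ℙ {ω | s0 ≤ Sf ω}).toReal ≤ Real.exp (-2 * m * δ^2) := by
    have h1 := measure_ge_le_exp_mul_mgf (X := Sf) (μ := ℙ) s0 hr0
      (hZindep.integrable_exp_mul_sum hZmeas (fun i _ => hint r i))
    rw [hZindep.mgf_sum hZmeas] at h1
    have h2 : ∏ i : Fin b, mgf (Z i) ℙ r = ((1 - p) + p * Real.exp r)^b := by
      rw [Finset.prod_congr rfl (fun i _ => hmgf r i), Finset.prod_const,
        Finset.card_univ, Fintype.card_fin]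
    rw [h2] at h1
    refine h1.trans ?_
    have h3 : ((1 - p) + p * Real.exp r)^b ≤ Real.exp (p * r + r^2/8) ^ b := by
      have hnn : (0:ℝ) ≤ (1 - p) + p * Real.exp r := by
        nlinarith [Real.exp_pos r]
      exact pow_le_pow_left₀ hnn (hoeff_bernoulli hp0 hp1 hr0) b
    calc Real.exp (-r * s0) * ((1 - p) + p * Real.exp r)^b
        ≤ Real.exp (-r * s0) * Real.exp (p * r + r^2/8) ^ b := by
          exact mul_le_mul_of_nonneg_left h3 (Real.exp_pos _).le
      _ = Real.exp (-r * s0 + b * (p * r + r^2/8)) := by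
          rw [← Real.exp_nat_mul, ← Real.exp_add]
      _ ≤ Real.exp (-2 * m * δ^2) :=
          Real.exp_le_exp.mpr (chern_exponent hbR hbmR ha0 hδm0 hrdef)
  -- conclude
  calc ℙ {ω | μ + t < multisetMedian ((Finset.univ.val.map fun i => X i ω) + adv)}
      ≤ ℙ {ω | s0 ≤ Sf ω} := measure_mono hsub
    _ = ENNReal.ofReal ((ℙ {ω | s0 ≤ Sf ω}).toReal) := (ENNReal.ofReal_toReal (measure_ne_top _ _)).symm
    _ ≤ ENNReal.ofReal (Real.exp (-2 * m * δ^2)) := ENNReal.ofReal_le_ofReal hchern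
end

section
/- The Gaussian mechanism M(D) = f(D) + N(0, σ²I) on a function f : 𝒳ⁿ → ℝᵈ with L2-sensitivity at most 1 satisfies (α, α/(2σ²))-Rényi differential privacy for every α > 1. -/
open MeasureTheory ProbabilityTheory Real Finset
open scoped ENNReal NNReal

lemma my_lintegral_pi_prod {n : ℕ} (μ : Fin n → Measure ℝ) [∀ i, SigmaFinite (μ i)]
    {f : Fin n → ℝ → ℝ≥0∞} (hf : ∀ i, Measurable (f i)) :
    ∫⁻ x, ∏ i, f i (x i) ∂Measure.pi μ = ∏ i, ∫⁻ y, f i y ∂μ i := by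
  induction n with
  | zero => simp
  | succ n ih =>
    rw [MeasurePreserving.lintegral_map_equiv (fun x => ∏ i, f i (x i)) _
      ((measurePreserving_piFinSuccAbove μ 0).symm)]
    simp_rw [MeasurableEquiv.piFinSuccAbove_symm_apply, Fin.insertNthEquiv, Equiv.coe_fn_mk,
      Fin.insertNth_zero, Fin.prod_univ_succ, Fin.cons_zero, Fin.cons_succ, Fin.zero_succAbove,
      cast_eq]
    have h2 : ∫⁻ (a : ℝ × (Fin n → ℝ)), f 0 a.1 * ∏ x : Fin n, f x.succ (a.2 x)
          ∂(μ 0).prod (Measure.pi fun j => μ j.succ)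
        = (∫⁻ y, f 0 y ∂μ 0) *
          ∫⁻ (y : Fin n → ℝ), ∏ x : Fin n, f x.succ (y x) ∂(Measure.pi fun j => μ j.succ) :=
      lintegral_prod_mul ((hf 0).aemeasurable)
        ((Finset.measurable_prod (f := fun (i : Fin n) (y : Fin n → ℝ) => f i.succ (y i)) _ (fun i _ => (hf i.succ).comp (measurable_pi_apply i))).aemeasurable)
    rw [h2, ih (fun j => μ j.succ) (fun j => hf j.succ)]

lemma my_pi_withDensity {n : ℕ} (μ : Fin n → Measure ℝ) [∀ i, SigmaFinite (μ i)]
    {f : Fin n → ℝ → ℝ≥0∞} (hf : ∀ i, Measurable (f i))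
    [∀ i, SigmaFinite ((μ i).withDensity (f i))] :
    (Measure.pi μ).withDensity (fun x => ∏ i, f i (x i))
      = Measure.pi (fun i => (μ i).withDensity (f i)) := by
  refine (Measure.pi_eq (μ := fun i => (μ i).withDensity (f i)) fun s hs => ?_).symm
  rw [withDensity_apply _ (MeasurableSet.univ_pi hs),
    ← lintegral_indicator (MeasurableSet.univ_pi hs)]
  have key : ∀ x : Fin n → ℝ, (Set.pi Set.univ s).indicator (fun x => ∏ i, f i (x i)) x
      = ∏ i, (s i).indicator (f i) (x i) := by
    intro x
    by_cases hx : x ∈ Set.pi Set.univ s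
    · rw [Set.indicator_of_mem hx]
      exact Finset.prod_congr rfl fun i _ =>
        (Set.indicator_of_mem (hx i (Set.mem_univ i)) _).symm
    · rw [Set.indicator_of_notMem hx]
      rw [Set.mem_univ_pi] at hx
      push_neg at hx
      obtain ⟨i, hi⟩ := hx
      exact (Finset.prod_eq_zero (Finset.mem_univ i) (Set.indicator_of_notMem hi _)).symm
  simp_rw [key]
  rw [my_lintegral_pi_prod μ (fun i => (hf i).indicator (hs i))]
  exact Finset.prod_congr rfl fun i _ => by
    rw [lintegral_indicator (hs i), withDensity_apply _ (hs i)]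

lemma my_gauss_integral (u v : ℝ) (V : ℝ≥0) (hV : V ≠ 0) (α : ℝ) :
    ∫ y, (gaussianPDFReal u V y / gaussianPDFReal v V y) ^ α * gaussianPDFReal v V y
      = Real.exp (α * (α - 1) * (u - v)^2 / (2 * V)) := by
  have hVpos : (0:ℝ) < V := lt_of_le_of_ne V.coe_nonneg (by exact_mod_cast hV.symm)
  have hc : (0:ℝ) < (Real.sqrt (2 * π * V))⁻¹ := by
    refine inv_pos.mpr (Real.sqrt_pos.mpr (by positivity))
  have hpt : ∀ y : ℝ, (gaussianPDFReal u V y / gaussianPDFReal v V y) ^ α * gaussianPDFReal v V y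
      = Real.exp (α * (α - 1) * (u - v)^2 / (2 * V)) * gaussianPDFReal (α * u + (1 - α) * v) V y := by
    intro y
    simp only [gaussianPDFReal]
    rw [mul_div_mul_left _ _ (ne_of_gt hc)]
    rw [← Real.exp_sub, ← Real.exp_mul]
    rw [show ∀ a b : ℝ, Real.exp a * ((Real.sqrt (2 * π * V))⁻¹ * Real.exp b)
        = (Real.sqrt (2 * π * V))⁻¹ * Real.exp (a + b) from
      fun a b => by rw [Real.exp_add]; ring]
    rw [show ∀ a b : ℝ, Real.exp a * ((Real.sqrt (2 * π * V))⁻¹ * Real.exp b)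
        = (Real.sqrt (2 * π * V))⁻¹ * Real.exp (a + b) from
      fun a b => by rw [Real.exp_add]; ring]
    congr 2
    have h2V : (2 : ℝ) * V ≠ 0 := by positivity
    field_simp
    ring
  rw [integral_congr_ae (ae_of_all _ hpt), integral_const_mul,
    integral_gaussianPDFReal_eq_one _ hV, mul_one]

lemma my_pi_integral {d : ℕ} (V : ℝ≥0) (hV : V ≠ 0) (α : ℝ) (u w : Fin d → ℝ) :
    ∫ x, (((Measure.pi fun i => gaussianReal (u i) V).rnDeriv
        (Measure.pi fun i => gaussianReal (w i) V)) x).toReal ^ α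
      ∂(Measure.pi fun i => gaussianReal (w i) V)
    = Real.exp (∑ i, α * (α - 1) * (u i - w i)^2 / (2 * V)) := by
  haveI : ∀ (m : Fin d → ℝ) (i : Fin d),
      SigmaFinite ((volume : Measure ℝ).withDensity (gaussianPDF (m i) V)) := fun m i => by
    rw [← gaussianReal_of_var_ne_zero _ hV]; infer_instance
  set lamd : Measure (Fin d → ℝ) := Measure.pi (fun _ => (volume : Measure ℝ)) with hlamd
  set pr : (Fin d → ℝ) → ℝ := fun x => ∏ i, gaussianPDFReal (u i) V (x i) with hpr
  set qr : (Fin d → ℝ) → ℝ := fun x => ∏ i, gaussianPDFReal (w i) V (x i) with hqr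
  set p : (Fin d → ℝ) → ℝ≥0∞ := fun x => ∏ i, gaussianPDF (u i) V (x i) with hp
  set q : (Fin d → ℝ) → ℝ≥0∞ := fun x => ∏ i, gaussianPDF (w i) V (x i) with hq
  have hpm : Measurable p := Finset.measurable_prod _
    (fun i _ => (measurable_gaussianPDF (u i) V).comp (measurable_pi_apply i))
  have hqm : Measurable q := Finset.measurable_prod _
    (fun i _ => (measurable_gaussianPDF (w i) V).comp (measurable_pi_apply i))
  have hP : lamd.withDensity p = Measure.pi (fun i => gaussianReal (u i) V) := by
    rw [hp, my_pi_withDensity (fun _ => volume)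
      (fun i => measurable_gaussianPDF (u i) V)]
    congr 1
    funext i
    rw [gaussianReal_of_var_ne_zero _ hV]
  have hQ : lamd.withDensity q = Measure.pi (fun i => gaussianReal (w i) V) := by
    rw [hq, my_pi_withDensity (fun _ => volume)
      (fun i => measurable_gaussianPDF (w i) V)]
    congr 1
    funext i
    rw [gaussianReal_of_var_ne_zero _ hV]
  set r : (Fin d → ℝ) → ℝ≥0∞ := fun x => p x / q x with hr
  have hrm : Measurable r := hpm.div hqm
  have hq0 : ∀ x, q x ≠ 0 := fun x =>
    Finset.prod_ne_zero_iff.mpr fun i _ => (gaussianPDF_pos _ hV _).ne'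
  have hqt : ∀ x, q x ≠ ∞ := fun x =>
    (ENNReal.prod_lt_top (fun i _ => ENNReal.ofReal_lt_top)).ne
  have hPQ : Measure.pi (fun i => gaussianReal (u i) V)
      = (Measure.pi (fun i => gaussianReal (w i) V)).withDensity r := by
    rw [← hQ, ← hP, ← withDensity_mul _ hqm hrm]
    congr 1
    funext x
    exact (ENNReal.mul_div_cancel (hq0 x) (hqt x)).symm
  have hrn : (Measure.pi (fun i => gaussianReal (u i) V)).rnDeriv
      (Measure.pi (fun i => gaussianReal (w i) V)) =ᵐ[Measure.pi (fun i => gaussianReal (w i) V)] r := by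
    rw [hPQ]
    exact Measure.rnDeriv_withDensity _ hrm
  rw [integral_congr_ae (hrn.mono fun x hx => by rw [hx])]
  -- positivity facts
  have hprpos : ∀ x, 0 < pr x := fun x =>
    Finset.prod_pos fun i _ => gaussianPDFReal_pos _ _ _ hV
  have hqrpos : ∀ x, 0 < qr x := fun x =>
    Finset.prod_pos fun i _ => gaussianPDFReal_pos _ _ _ hV
  have hqrm : Measurable qr := Finset.measurable_prod _
    (fun i _ => (measurable_gaussianPDFReal (w i) V).comp (measurable_pi_apply i))
  have hpofr : ∀ x, p x = ENNReal.ofReal (pr x) := fun x =>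
    (ENNReal.ofReal_prod_of_nonneg (fun i _ => gaussianPDFReal_nonneg _ _ _)).symm
  have hqofr : ∀ x, q x = ENNReal.ofReal (qr x) := fun x =>
    (ENNReal.ofReal_prod_of_nonneg (fun i _ => gaussianPDFReal_nonneg _ _ _)).symm
  have hrtoReal : ∀ x, (r x).toReal = pr x / qr x := fun x => by
    rw [hr]
    simp only []
    rw [hpofr x, hqofr x, ← ENNReal.ofReal_div_of_pos (hqrpos x),
      ENNReal.toReal_ofReal (div_nonneg (hprpos x).le (hqrpos x).le)]
  rw [← hQ]
  have hqnn : q = fun x => ((qr x).toNNReal : ℝ≥0∞) := by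
    funext x; rw [hqofr x]; rfl
  rw [hqnn, integral_withDensity_eq_integral_smul hqrm.real_toNNReal]
  have hpoint : ∀ x, (qr x).toNNReal • ((r x).toReal ^ α)
      = ∏ i, ((gaussianPDFReal (u i) V (x i) / gaussianPDFReal (w i) V (x i)) ^ α
          * gaussianPDFReal (w i) V (x i)) := by
    intro x
    rw [NNReal.smul_def, smul_eq_mul, Real.coe_toNNReal _ (hqrpos x).le, hrtoReal x,
      hpr, hqr]
    simp only []
    rw [← Finset.prod_div_distrib, ← Real.finset_prod_rpow _ _
      (fun i _ => div_nonneg (gaussianPDFReal_nonneg _ _ _) (gaussianPDFReal_nonneg _ _ _))]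
    rw [mul_comm, ← Finset.prod_mul_distrib]
  rw [integral_congr_ae (ae_of_all _ hpoint),
    show lamd = (volume : Measure (Fin d → ℝ)) from (hlamd.trans (volume_pi (α := fun _ : Fin d => ℝ)).symm)]
  rw [volume_pi, integral_fintype_prod_eq_prod (𝕜 := ℝ)
    (fun i y => (gaussianPDFReal (u i) V y / gaussianPDFReal (w i) V y) ^ α
      * gaussianPDFReal (w i) V y)]
  rw [Real.exp_sum]
  exact Finset.prod_congr rfl fun i _ => my_gauss_integral (u i) (w i) V hV α

/-- Rényi divergence of order `α`. -/
noncomputable def renyiD {Ω : Type*} [MeasurableSpace Ω] (α : ℝ) (P Q : Measure Ω) : ℝ :=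
  (α - 1)⁻¹ * Real.log (∫ x, ((P.rnDeriv Q) x).toReal ^ α ∂Q)

/-- The Gaussian mechanism `M(D) = f(D) + N(0, σ²I)` on a function `f : 𝒳ⁿ → ℝᵈ` with
L2-sensitivity at most `1` satisfies `(α, α/(2σ²))`-RDP for every `α > 1`. -/
theorem stmt13 {X : Type*} (d : ℕ) (adj : X → X → Prop)
    (f : X → EuclideanSpace ℝ (Fin d)) (σ α : ℝ) (hσ : 0 < σ) (hα : 1 < α)
    (hsens : ∀ D D', adj D D' → ‖f D - f D'‖ ≤ 1) :
    ∀ D D', adj D D' →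
      renyiD α
        (Measure.map (fun ξ => f D + (EuclideanSpace.equiv (Fin d) ℝ).symm ξ)
          (Measure.pi fun _ : Fin d => gaussianReal 0 ⟨σ^2, sq_nonneg σ⟩))
        (Measure.map (fun ξ => f D' + (EuclideanSpace.equiv (Fin d) ℝ).symm ξ)
          (Measure.pi fun _ : Fin d => gaussianReal 0 ⟨σ^2, sq_nonneg σ⟩))
      ≤ α / (2 * σ^2) := by
  intro D D' hadj
  have hσ2 : σ^2 ≠ 0 := by positivity
  have hV : (⟨σ^2, sq_nonneg σ⟩ : ℝ≥0) ≠ 0 := fun h => hσ2 (congrArg NNReal.toReal h)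
  haveI hG : ∀ m : ℝ, IsProbabilityMeasure (gaussianReal m ⟨σ^2, sq_nonneg σ⟩) := fun m => by
    exact instIsProbabilityMeasureGaussianReal m _
  have hmap : ∀ u : Fin d → ℝ,
      Measure.map (fun ξ : Fin d → ℝ => u + ξ)
        (Measure.pi fun _ : Fin d => gaussianReal 0 ⟨σ^2, sq_nonneg σ⟩)
      = Measure.pi fun i => gaussianReal (u i) ⟨σ^2, sq_nonneg σ⟩ := by
    intro u
    have h := measurePreserving_pi (fun _ : Fin d => gaussianReal 0 (⟨σ^2, sq_nonneg σ⟩ : ℝ≥0))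
      (fun i => gaussianReal (u i) (⟨σ^2, sq_nonneg σ⟩ : ℝ≥0)) (f := fun i y => u i + y)
      (fun i => ⟨measurable_const_add _, by
        exact (gaussianReal_map_const_add (μ := 0) (v := ⟨σ^2, sq_nonneg σ⟩) (u i)).trans (by simp)⟩)
    exact h.map_eq
  have hfun : ∀ v : EuclideanSpace ℝ (Fin d),
      (fun ξ => v + (EuclideanSpace.equiv (Fin d) ℝ).symm ξ)
        = (MeasurableEquiv.toLp 2 (Fin d → ℝ)) ∘
          (fun ξ : Fin d → ℝ => (EuclideanSpace.equiv (Fin d) ℝ) v + ξ) := by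
    intro v; funext ξ; rfl
  have hren : ∀ P Q : Measure (Fin d → ℝ), [SigmaFinite P] → [SigmaFinite Q] →
      renyiD α (P.map (MeasurableEquiv.toLp 2 (Fin d → ℝ)))
        (Q.map (MeasurableEquiv.toLp 2 (Fin d → ℝ))) = renyiD α P Q := by
    intro P Q _ _
    simp only [renyiD]
    rw [integral_map_equiv (MeasurableEquiv.toLp 2 (Fin d → ℝ))]
    congr 2
    apply integral_congr_ae
    filter_upwards [(MeasurableEquiv.toLp 2 (Fin d → ℝ)).measurableEmbedding.rnDeriv_map P Q]
      with x hx
    rw [← hx]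
  rw [hfun, hfun, ← Measure.map_map (MeasurableEquiv.toLp 2 (Fin d → ℝ)).measurable
    (measurable_const_add _), ← Measure.map_map (MeasurableEquiv.toLp 2 (Fin d → ℝ)).measurable
    (measurable_const_add _), hmap, hmap, hren,
    ← hmap ((EuclideanSpace.equiv (Fin d) ℝ) (f D)), ← hmap ((EuclideanSpace.equiv (Fin d) ℝ) (f D'))]
  show renyiD α
      (Measure.map (fun ξ : Fin d → ℝ => (EuclideanSpace.equiv (Fin d) ℝ) (f D) + ξ)
        (Measure.pi fun _ : Fin d => gaussianReal 0 ⟨σ^2, sq_nonneg σ⟩))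
      (Measure.map (fun ξ : Fin d → ℝ => (EuclideanSpace.equiv (Fin d) ℝ) (f D') + ξ)
        (Measure.pi fun _ : Fin d => gaussianReal 0 ⟨σ^2, sq_nonneg σ⟩))
    ≤ α / (2 * σ^2)
  rw [hmap, hmap]
  simp only [renyiD]
  rw [my_pi_integral _ hV α _ _, Real.log_exp]
  rw [← Finset.sum_div, ← Finset.mul_sum]
  set u : Fin d → ℝ := (EuclideanSpace.equiv (Fin d) ℝ) (f D)
  set w : Fin d → ℝ := (EuclideanSpace.equiv (Fin d) ℝ) (f D')
  set S : ℝ := ∑ i, (u i - w i)^2 with hS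
  show (α - 1)⁻¹ * (α * (α - 1) * S / (2 * σ^2)) ≤ α / (2 * σ^2)
  have hS0 : 0 ≤ S := Finset.sum_nonneg fun i _ => sq_nonneg _
  have hSnorm : S = ‖f D - f D'‖^2 := by
    rw [EuclideanSpace.norm_eq, Real.sq_sqrt (Finset.sum_nonneg fun i _ => by positivity)]
    exact Finset.sum_congr rfl fun i _ => by rw [Real.norm_eq_abs, sq_abs]; rfl
  have hle : S ≤ 1 := by
    have hn := hsens D D' hadj
    have hn0 := norm_nonneg (f D - f D')
    nlinarith
  have hα1 : α - 1 ≠ 0 := sub_ne_zero.mpr hα.ne'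
  have heq : (α - 1)⁻¹ * (α * (α - 1) * S / (2 * σ^2)) = α * S / (2 * σ^2) := by
    field_simp
  rw [heq, div_le_div_iff₀ (by positivity) (by positivity)]
  nlinarith [mul_nonneg (mul_nonneg (sub_nonneg.mpr hle) (by linarith : (0:ℝ) ≤ α))
    (by positivity : (0:ℝ) ≤ 2 * σ^2)]
end

section
/- If more than (1−β)m of m reported scores lie in a set A⁺ and fewer than βm are adversarial, with β < 1/2, then the median of all m scores lies between the (1/2 − β)-quantile and the (1/2 + β)-quantile of A⁺. -/
/-- The `q`-quantile of a finite multiset of reals: its `⌈q·card⌉`-th smallest element. -/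
noncomputable def multisetQuantile (q : ℝ) (s : Multiset ℝ) : ℝ :=
  (s.sort (· ≤ ·)).getD (⌈q * s.card⌉.toNat - 1) 0

open Classical

/-- In a sorted list, at least `i+1` elements are `≤` the `i`-th element. -/
lemma countP_le_getElem {L : List ℝ} (hL : L.Pairwise (· ≤ ·)) {i : ℕ} (hi : i < L.length) :
    i + 1 ≤ L.countP (fun a => decide (a ≤ L[i])) := by
  have h1 : (L.take (i+1)).length = i + 1 := by
    simp [List.length_take]; omega
  have h2 : ∀ a ∈ L.take (i+1), (fun a => decide (a ≤ L[i])) a = true := by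
    intro a ha
    rw [List.mem_iff_getElem] at ha
    obtain ⟨j, hj, rfl⟩ := ha
    have hj' : j < i + 1 := by simpa [h1] using hj
    rw [List.getElem_take]
    simp only [decide_eq_true_eq]
    rcases Nat.lt_or_ge j i with h | h
    · exact (List.pairwise_iff_getElem.mp hL) j i (by omega) hi h
    · have : j = i := by omega
      subst this; exact le_refl _
  calc i + 1 = (L.take (i+1)).countP (fun a => decide (a ≤ L[i])) := by
        rw [List.countP_eq_length.mpr h2, h1]
    _ ≤ _ := (List.take_sublist _ _).countP_le

/-- In a sorted list, at least `len - i` elements are `>` any `x < L[i]`. -/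
lemma countP_gt_of_lt_getElem {L : List ℝ} (hL : L.Pairwise (· ≤ ·)) {i : ℕ} (hi : i < L.length)
    {x : ℝ} (hx : x < L[i]) :
    L.length - i ≤ L.countP (fun a => decide (x < a)) := by
  have h1 : (L.drop i).length = L.length - i := by simp
  have h2 : ∀ a ∈ L.drop i, (fun a => decide (x < a)) a = true := by
    intro a ha
    rw [List.mem_iff_getElem] at ha
    obtain ⟨j, hj, rfl⟩ := ha
    rw [List.getElem_drop]
    simp only [decide_eq_true_eq]
    refine lt_of_lt_of_le hx ?_
    rcases Nat.eq_zero_or_pos j with h | h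
    · subst h; simp
    · exact (List.pairwise_iff_getElem.mp hL) i (i+j) hi (by omega) (by omega)
  calc L.length - i = (L.drop i).countP _ := by rw [List.countP_eq_length.mpr h2, h1]
    _ ≤ _ := (List.drop_sublist _ _).countP_le

/-- If at least `i+1` elements of a sorted list are `≤ x`, then the `i`-th element is `≤ x`. -/
lemma getElem_le_of_countP {L : List ℝ} (hL : L.Pairwise (· ≤ ·)) {i : ℕ} (hi : i < L.length)
    {x : ℝ} (h : i + 1 ≤ L.countP (fun a => decide (a ≤ x))) : L[i] ≤ x := by
  by_contra hcon
  push_neg at hcon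
  have h2 := countP_gt_of_lt_getElem hL hi hcon
  have h3 : L.countP (fun a => decide (a ≤ x)) + L.countP (fun a => decide (x < a)) = L.length := by
    have heq : (fun a : ℝ => decide (¬(decide (a ≤ x)) = true)) = (fun a => decide (x < a)) := by
      funext a; simp [not_le]
    rw [← heq, ← List.length_eq_countP_add_countP (fun a => decide (a ≤ x))]
  omega


lemma multiset_countP_bridge (s : Multiset ℝ) (x : ℝ) :
    (s.sort (· ≤ ·)).countP (fun a => decide (a ≤ x)) = s.countP (fun a => a ≤ x) := by
  conv_rhs => rw [← Multiset.sort_eq s (· ≤ ·)]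
  rw [Multiset.coe_countP]

/-- `i`-th smallest of a supermultiset is `≤` the `i`-th smallest of the submultiset. -/
lemma sorted_getD_anti {s t : Multiset ℝ} (hst : s ≤ t) {i : ℕ} (hi : i < s.card) :
    (t.sort (· ≤ ·)).getD i 0 ≤ (s.sort (· ≤ ·)).getD i 0 := by
  have hls : i < (s.sort (· ≤ ·)).length := by rwa [Multiset.length_sort]
  have hlt : i < (t.sort (· ≤ ·)).length := by
    rw [Multiset.length_sort]; exact lt_of_lt_of_le hi (Multiset.card_le_card hst)
  rw [List.getD_eq_getElem _ _ hls, List.getD_eq_getElem _ _ hlt]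
  set x := (s.sort (· ≤ ·))[i]
  apply getElem_le_of_countP (Multiset.pairwise_sort _ _) hlt
  have h1 : i + 1 ≤ (s.sort (· ≤ ·)).countP (fun a => decide (a ≤ x)) :=
    countP_le_getElem (Multiset.pairwise_sort _ _) hls
  calc i + 1 ≤ s.countP (fun a => a ≤ x) := by rwa [multiset_countP_bridge] at h1
    _ ≤ t.countP (fun a => a ≤ x) := Multiset.countP_le_of_le _ hst
    _ = _ := (multiset_countP_bridge t x).symm

/-- `i`-th smallest of a submultiset is `≤` the `i + (extra)`-th smallest of the supermultiset. -/
lemma sorted_getD_shift {s t : Multiset ℝ} (hst : s ≤ t) {i : ℕ} (hi : i < s.card) :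
    (s.sort (· ≤ ·)).getD i 0 ≤ (t.sort (· ≤ ·)).getD (i + (t.card - s.card)) 0 := by
  have hcard : s.card ≤ t.card := Multiset.card_le_card hst
  have hls : i < (s.sort (· ≤ ·)).length := by rwa [Multiset.length_sort]
  have hlt : i + (t.card - s.card) < (t.sort (· ≤ ·)).length := by
    rw [Multiset.length_sort]; omega
  rw [List.getD_eq_getElem _ _ hls, List.getD_eq_getElem _ _ hlt]
  set x := (t.sort (· ≤ ·))[i + (t.card - s.card)]
  by_contra hcon
  push_neg at hcon
  -- many elements of t are ≤ x
  have h1 : i + (t.card - s.card) + 1 ≤ (t.sort (· ≤ ·)).countP (fun a => decide (a ≤ x)) :=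
    countP_le_getElem (Multiset.pairwise_sort _ _) hlt
  -- many elements of s (hence t) are > x
  have h2 : s.card - i ≤ (s.sort (· ≤ ·)).countP (fun a => decide (x < a)) := by
    have := countP_gt_of_lt_getElem (Multiset.pairwise_sort s (· ≤ ·)) hls hcon
    rwa [Multiset.length_sort] at this
  have hbr : ∀ u : Multiset ℝ, (u.sort (· ≤ ·)).countP (fun a => decide (x < a))
      = u.countP (fun a => x < a) := by
    intro u
    conv_rhs => rw [← Multiset.sort_eq u (· ≤ ·)]
    rw [Multiset.coe_countP]
  have h3 : s.card - i ≤ t.countP (fun a => x < a) := by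
    rw [hbr] at h2
    exact le_trans h2 (Multiset.countP_le_of_le _ hst)
  have h4 : t.countP (fun a => a ≤ x) + t.countP (fun a => x < a) = t.card := by
    rw [← multiset_countP_bridge, ← hbr]
    have heq : (fun a : ℝ => decide (¬(decide (a ≤ x)) = true)) = (fun a => decide (x < a)) := by
      funext a; simp [not_le]
    rw [← heq, ← List.length_eq_countP_add_countP (fun a => decide (a ≤ x)), Multiset.length_sort]
  rw [multiset_countP_bridge] at h1
  omega


lemma sorted_getD_mono (s : Multiset ℝ) {i j : ℕ} (hij : i ≤ j) (hj : j < s.card) :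
    (s.sort (· ≤ ·)).getD i 0 ≤ (s.sort (· ≤ ·)).getD j 0 := by
  have hlj : j < (s.sort (· ≤ ·)).length := by rwa [Multiset.length_sort]
  have hli : i < (s.sort (· ≤ ·)).length := lt_of_le_of_lt hij hlj
  rw [List.getD_eq_getElem _ _ hli, List.getD_eq_getElem _ _ hlj]
  rcases eq_or_lt_of_le hij with rfl | h
  · exact le_refl _
  · exact (List.pairwise_iff_getElem.mp (Multiset.pairwise_sort _ _)) i j hli hlj h


/-- Deterministic sandwiching of the robust median: if more than `(1−β)m` of the `m` scores are
benign (multiset `Aplus`) and fewer than `βm` are adversarial, with `β < 1/2`, then the median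
of all `m` scores lies between the `(1/2−β)`- and `(1/2+β)`-quantiles of the benign scores. -/
theorem stmt19 (m : ℕ) (β : ℝ) (hβ0 : 0 < β) (hβ : β < 1/2)
    (Aplus Aadv : Multiset ℝ)
    (hm : (Aplus + Aadv).card = m)
    (hplus : (1 - β) * m < (Aplus.card : ℝ))
    (hadv : (Aadv.card : ℝ) < β * m) :
    multisetQuantile (1/2 - β) Aplus ≤ multisetMedian (Aplus + Aadv) ∧
    multisetMedian (Aplus + Aadv) ≤ multisetQuantile (1/2 + β) Aplus := by
  set t := Aplus + Aadv with ht
  set n := Aplus.card with hn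
  set a := Aadv.card with ha
  have hma : n + a = m := by rw [← hm, ht, Multiset.card_add]
  have hst : Aplus ≤ t := Multiset.le_add_right _ _
  -- basic positivity
  have hn0 : 0 < n := by
    by_contra hcon
    push_neg at hcon
    interval_cases n
    have : (0:ℝ) ≤ (1 - β) * m := by
      apply mul_nonneg (by linarith) (Nat.cast_nonneg m)
    simp at hplus
    linarith
  have hm0 : 0 < m := by omega
  have hnm : n ≤ m := by omega
  have hnmR : (n:ℝ) ≤ (m:ℝ) := Nat.cast_le.mpr hnm
  have hnR : (0:ℝ) < n := Nat.cast_pos.mpr hn0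
  set c := (⌈(1/2 - β) * (n:ℝ)⌉).toNat with hc
  set h := (⌈(1/2 + β) * (n:ℝ)⌉).toNat with hh
  set k := (m+1)/2 with hk
  have hcpos : 0 < ⌈(1/2 - β) * (n:ℝ)⌉ := Int.ceil_pos.mpr (by nlinarith)
  have hhpos : 0 < ⌈(1/2 + β) * (n:ℝ)⌉ := Int.ceil_pos.mpr (by nlinarith)
  have hcR : (c:ℝ) = (⌈(1/2 - β) * (n:ℝ)⌉ : ℝ) := by
    rw [hc]; norm_cast; exact Int.toNat_of_nonneg (le_of_lt hcpos)
  have hhR : (h:ℝ) = (⌈(1/2 + β) * (n:ℝ)⌉ : ℝ) := by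
    rw [hh]; norm_cast; exact Int.toNat_of_nonneg (le_of_lt hhpos)
  have hc1 : 1 ≤ c := by rw [hc]; omega
  have hh1 : 1 ≤ h := by rw [hh]; omega
  have hc_lt : (c:ℝ) < (1/2 - β) * n + 1 := by rw [hcR]; exact Int.ceil_lt_add_one _
  have hh_ge : (1/2 + β) * (n:ℝ) ≤ (h:ℝ) := by rw [hhR]; exact Int.le_ceil _
  have hh_lt : (h:ℝ) < (1/2 + β) * n + 1 := by rw [hhR]; exact Int.ceil_lt_add_one _
  have hc_ge : (1/2 - β) * (n:ℝ) ≤ (c:ℝ) := by rw [hcR]; exact Int.le_ceil _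
  have hcn : c ≤ n := by
    have : ((c:ℝ)) < (n:ℝ) + 1 := by nlinarith
    exact_mod_cast Nat.lt_add_one_iff.mp (by exact_mod_cast this)
  have hhn : h ≤ n := by
    have : ((h:ℝ)) < (n:ℝ) + 1 := by nlinarith
    exact_mod_cast Nat.lt_add_one_iff.mp (by exact_mod_cast this)
  -- F1 : c + a ≤ k
  have F1 : c + a ≤ k := by
    have hreal : ((c + a) * 2 : ℝ) < ((m:ℝ) + 2) := by
      nlinarith
    have hnat : (c + a) * 2 < m + 2 := by exact_mod_cast (by push_cast; linarith : ((c+a)*2 : ℝ) < ((m+2 : ℕ) : ℝ))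
    omega
  -- F2 : k ≤ h
  have F2 : k ≤ h := by
    have t1 : (1+2*β)*((1-β)*m) < (1+2*β)*(n:ℝ) :=
      mul_lt_mul_of_pos_left hplus (by linarith)
    have t2 : (m:ℝ) ≤ (1+2*β)*((1-β)*m) := by
      have h0 : (0:ℝ) ≤ β*(1-2*β)*m :=
        mul_nonneg (mul_nonneg hβ0.le (by linarith)) (Nat.cast_nonneg m)
      have hid : (1+2*β)*((1-β)*(m:ℝ)) = m + β*(1-2*β)*m := by ring
      linarith
    have hreal : (m:ℝ) < 2 * h := by linarith
    have hnat : m < 2 * h := by exact_mod_cast hreal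
    omega
  -- index bounds
  have htcard : t.card = m := hm
  have htn : t.card - n = a := by omega
  -- now the chains
  unfold multisetQuantile multisetMedian
  rw [htcard]
  constructor
  · have step1 : (Aplus.sort (· ≤ ·)).getD (c - 1) 0 ≤ (t.sort (· ≤ ·)).getD ((c-1) + (t.card - n)) 0 :=
      sorted_getD_shift hst (by omega)
    have step2 : (t.sort (· ≤ ·)).getD ((c-1) + (t.card - n)) 0 ≤ (t.sort (· ≤ ·)).getD (k - 1) 0 := by
      apply sorted_getD_mono
      · omega
      · omega
    have : ⌈(1/2 - β) * ((Aplus.card : ℕ):ℝ)⌉.toNat = c := rfl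
    rw [this]
    exact le_trans step1 step2
  · have step1 : (t.sort (· ≤ ·)).getD (k - 1) 0 ≤ (t.sort (· ≤ ·)).getD (h - 1) 0 := by
      apply sorted_getD_mono
      · omega
      · omega
    have step2 : (t.sort (· ≤ ·)).getD (h - 1) 0 ≤ (Aplus.sort (· ≤ ·)).getD (h - 1) 0 :=
      sorted_getD_anti hst (by omega)
    have : ⌈(1/2 + β) * ((Aplus.card : ℕ):ℝ)⌉.toNat = h := rfl
    rw [this]
    exact le_trans step1 step2
end
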